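/- The state |ψ_s⟩ = |0⟩|0⟩|i⟩ + ω^s|0⟩|i⟩|0⟩ + ω^{2s}|i⟩|0⟩|0⟩ in ℂ^d⊗ℂ^d⊗ℂ^d (with i ≠ 0, ω = e^{2πi/3}, s ∈ Z_3) is mapped by a product of three local unitaries to the three-qubit W state |001⟩+|010⟩+|100⟩ embedded in (ℂ^d)^{⊗3}; in particular it is a genuinely entangled state, i.e., it has Schmidt rank ≥ 2 across each of the three bipartitions A_1|A_2A_3, A_2|A_1A_3, A_3|A_1A_2. -/

import Mathlib

set_option maxHeartbeats 1000000 in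
private lemma rank_ge_two' {m n : Type*} [Fintype m] [Fintype n] [DecidableEq m] [DecidableEq n]
    (M : Matrix m n ℂ) (r1 r2 : m) (j1 j2 : n)
    (h11 : M r1 j1 ≠ 0) (h22 : M r2 j2 ≠ 0) (h12 : M r1 j2 = 0) (h21 : M r2 j1 = 0) :
    2 ≤ M.rank := by
  have hv : ∀ j : n, (fun r => M r j) ∈ LinearMap.range M.mulVecLin := by
    intro j
    exact ⟨Pi.single j 1, by ext r; simp [Matrix.mulVecLin_apply, Matrix.mulVec_single]⟩
  set v1 : m → ℂ := fun r => M r j1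
  set v2 : m → ℂ := fun r => M r j2
  have hli : LinearIndependent ℂ ![v1, v2] := by
    rw [LinearIndependent.pair_iff]
    intro a b hab
    have h1 := congrFun hab r1
    have h2 := congrFun hab r2
    simp [v1, v2, h12, h21] at h1 h2
    constructor
    · rcases h1 with h | h
      · exact h
      · exact absurd h h11
    · rcases h2 with h | h
      · exact h
      · exact absurd h h22
  have hw : LinearIndependent ℂ (fun k : Fin 2 =>
      (⟨![v1, v2] k, by fin_cases k <;> simpa using hv _⟩ :
        LinearMap.range M.mulVecLin)) := by
    apply LinearIndependent.of_comp (LinearMap.range M.mulVecLin).subtype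
    convert hli <;> rfl
  have := hw.fintype_card_le_finrank
  simpa [Matrix.rank] using this

private lemma unit_mem' {d : ℕ} (σ : Equiv.Perm (Fin d)) (w : Fin d → ℂ)
    (hw : ∀ a, star (w a) * w a = 1) :
    (Matrix.of fun t a => w a * (if t = σ a then 1 else 0)) ∈
      Matrix.unitaryGroup (Fin d) ℂ := by
  rw [Matrix.mem_unitaryGroup_iff]
  ext t t'
  simp only [Matrix.mul_apply, Matrix.star_apply, Matrix.of_apply, star_mul',
    Matrix.one_apply]
  have key : ∀ a : Fin d, (w a * (if t = σ a then (1:ℂ) else 0)) *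
      (star (w a) * star (if t' = σ a then (1:ℂ) else 0)) =
      if a = σ.symm t then (if t' = σ a then 1 else 0) else 0 := by
    intro a
    have hsw : w a * star (w a) = 1 := by rw [mul_comm]; exact hw a
    by_cases h : t = σ a
    · have ha : a = σ.symm t := by simp [h]
      rw [if_pos ha, if_pos h]
      by_cases h' : t' = σ a <;> simp only [h', if_true, if_false,
        mul_one, mul_zero, star_one, star_zero] <;> simpa using hsw
    · have : ¬ a = σ.symm t := by
        intro hh; apply h; rw [hh]; simp
      simp [h, this]
  rw [Finset.sum_congr rfl (fun a _ => key a), Finset.sum_ite_eq']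
  simp only [Finset.mem_univ, if_true]
  by_cases h : t = t'
  · simp [h]
  · have : ¬ t' = σ (σ.symm t) := by simpa using fun hh => h hh.symm
    simp only [this, if_false, h]

private lemma three_ite' {α : Type*} [DecidableEq α] (p1 p2 p3 : α) (h12 : p1 ≠ p2)
    (h13 : p1 ≠ p3) (h23 : p2 ≠ p3) (v1 v2 v3 : ℂ) (t : α) :
    (if t = p1 then v1 else if t = p2 then v2 else if t = p3 then v3 else 0) =
      (if t = p1 then v1 else 0) + (if t = p2 then v2 else 0) +
        (if t = p3 then v3 else 0) := by
  split_ifs <;> simp_all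

private lemma sum3'' {d : ℕ} (F : Fin d → Fin d → Fin d → ℂ) (x y z : Fin d) (v : ℂ) :
    (∑ a : Fin d, ∑ b : Fin d, ∑ c : Fin d,
        F a b c * if (a, b, c) = (x, y, z) then v else 0) = F x y z * v := by
  simp [Prod.mk.injEq, ite_and, mul_ite, mul_zero, Finset.sum_ite_eq']

private lemma phase_unit' (x : ℂ) (hx : (starRingEnd ℂ) x = x) :
    (starRingEnd ℂ) (Complex.exp (-(2 * Real.pi * Complex.I * x / 3))) *
      Complex.exp (-(2 * Real.pi * Complex.I * x / 3)) = 1 := by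
  rw [← Complex.exp_conj, ← Complex.exp_add]
  rw [show (starRingEnd ℂ) (-(2 * Real.pi * Complex.I * x / 3)) +
      -(2 * Real.pi * Complex.I * x / 3) = 0 by
    simp [map_div₀, map_mul, map_neg, map_ofNat, Complex.conj_I, hx,
      Complex.conj_ofReal]; ring]
  exact Complex.exp_zero

private lemma phase_cancel' (x : ℂ) :
    Complex.exp (-(2 * Real.pi * Complex.I * x / 3)) *
      Complex.exp (2 * Real.pi * Complex.I * x / 3) = 1 := by
  rw [← Complex.exp_add]; simp

set_option maxHeartbeats 1000000 in
/-- The state |ψ_s⟩ = |00i⟩ + ω^s|0i0⟩ + ω^{2s}|i00⟩ (i ≠ 0, ω = e^{2πi/3})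
is mapped by a product of three local unitaries to the three-qubit W state
|001⟩+|010⟩+|100⟩ embedded in (ℂ^d)^{⊗3}; in particular it has Schmidt rank
≥ 2 across each of the three bipartitions, i.e. it is genuinely entangled. -/
theorem stmt15 (d : ℕ) [NeZero d] (hd : 2 ≤ d) (i : Fin d) (hi : i ≠ 0)
    (s : ℕ) (ψ : Fin d × Fin d × Fin d → ℂ)
    (hψ : ψ = fun t => if t = (0, 0, i) then 1
      else if t = (0, i, 0) then Complex.exp (2 * Real.pi * Complex.I * (s : ℂ) / 3)
      else if t = (i, 0, 0) then Complex.exp (2 * Real.pi * Complex.I * (2 * s : ℂ) / 3)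
      else 0) :
    (∃ U1 U2 U3 : Matrix (Fin d) (Fin d) ℂ,
      U1 ∈ Matrix.unitaryGroup (Fin d) ℂ ∧ U2 ∈ Matrix.unitaryGroup (Fin d) ℂ ∧
      U3 ∈ Matrix.unitaryGroup (Fin d) ℂ ∧
      (fun t : Fin d × Fin d × Fin d => ∑ a : Fin d, ∑ b : Fin d, ∑ c : Fin d,
          U1 t.1 a * U2 t.2.1 b * U3 t.2.2 c * ψ (a, b, c)) =
        fun t => if t = (0, 0, 1) then 1 else if t = (0, 1, 0) then 1
          else if t = (1, 0, 0) then 1 else 0) ∧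
    2 ≤ (Matrix.of fun (a : Fin d) (bc : Fin d × Fin d) => ψ (a, bc.1, bc.2)).rank ∧
    2 ≤ (Matrix.of fun (b : Fin d) (ac : Fin d × Fin d) => ψ (ac.1, b, ac.2)).rank ∧
    2 ≤ (Matrix.of fun (c : Fin d) (ab : Fin d × Fin d) => ψ (ab.1, ab.2, c)).rank := by
  have h10 : (1 : Fin d) ≠ 0 := by
    intro h
    have h2 := congrArg Fin.val h
    rw [Fin.val_one', Fin.val_zero, Nat.mod_eq_of_lt (by omega)] at h2
    omega
  set ω1 : ℂ := Complex.exp (2 * Real.pi * Complex.I * (s : ℂ) / 3) with hω1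
  set ω2 : ℂ := Complex.exp (2 * Real.pi * Complex.I * (2 * s : ℂ) / 3) with hω2
  have hω1ne : ω1 ≠ 0 := Complex.exp_ne_zero _
  have hω2ne : ω2 ≠ 0 := Complex.exp_ne_zero _
  set c1 : ℂ := Complex.exp (-(2 * Real.pi * Complex.I * (2 * s : ℂ) / 3)) with hc1
  set c2 : ℂ := Complex.exp (-(2 * Real.pi * Complex.I * (s : ℂ) / 3)) with hc2
  have hc1u : (starRingEnd ℂ) c1 * c1 = 1 :=
    phase_unit' _ (by simp [map_mul, map_ofNat, Complex.conj_natCast])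
  have hc2u : (starRingEnd ℂ) c2 * c2 = 1 := phase_unit' _ (by simp)
  have hc1ω : c1 * ω2 = 1 := phase_cancel' _
  have hc2ω : c2 * ω1 = 1 := phase_cancel' _
  have hne12 : ((0, 0, i) : Fin d × Fin d × Fin d) ≠ (0, i, 0) :=
    fun h => hi (congrArg (fun p => p.2.1) h).symm
  have hne13 : ((0, 0, i) : Fin d × Fin d × Fin d) ≠ (i, 0, 0) :=
    fun h => hi (congrArg (fun p => p.1) h).symm
  have hne23 : ((0, i, 0) : Fin d × Fin d × Fin d) ≠ (i, 0, 0) :=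
    fun h => hi (congrArg (fun p => p.1) h).symm
  have hne12' : ((0, 0, 1) : Fin d × Fin d × Fin d) ≠ (0, 1, 0) :=
    fun h => h10 (congrArg (fun p => p.2.1) h).symm
  have hne13' : ((0, 0, 1) : Fin d × Fin d × Fin d) ≠ (1, 0, 0) :=
    fun h => h10 (congrArg (fun p => p.1) h).symm
  have hne23' : ((0, 1, 0) : Fin d × Fin d × Fin d) ≠ (1, 0, 0) :=
    fun h => h10 (congrArg (fun p => p.1) h).symm
  subst hψ
  refine ⟨?_, ?_, ?_, ?_⟩
  · refine ⟨Matrix.of fun t a => (if a = i then c1 else 1) *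
        (if t = Equiv.swap 1 i a then 1 else 0),
      Matrix.of fun t a => (if a = i then c2 else 1) *
        (if t = Equiv.swap 1 i a then 1 else 0),
      Matrix.of fun t a => (if a = i then (1:ℂ) else 1) *
        (if t = Equiv.swap 1 i a then 1 else 0),
      unit_mem' _ _ (fun a => by by_cases h : a = i <;> simp [h, hc1u]),
      unit_mem' _ _ (fun a => by by_cases h : a = i <;> simp [h, hc2u]),
      unit_mem' _ _ (fun a => by by_cases h : a = i <;> simp [h]), ?_⟩
    have hσ0 : Equiv.swap (1 : Fin d) i 0 = 0 :=
      Equiv.swap_apply_of_ne_of_ne (Ne.symm h10) (Ne.symm hi)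
    have hσi : Equiv.swap (1 : Fin d) i i = 1 := Equiv.swap_apply_right 1 i
    funext t
    obtain ⟨t1, t2, t3⟩ := t
    have expand : ∀ a b c : Fin d,
        (if ((a, b, c) : Fin d × Fin d × Fin d) = (0, 0, i) then (1:ℂ)
          else if (a, b, c) = (0, i, 0) then ω1
          else if (a, b, c) = (i, 0, 0) then ω2 else 0) =
        (if ((a, b, c) : Fin d × Fin d × Fin d) = (0, 0, i) then (1:ℂ) else 0) +
        (if ((a, b, c) : Fin d × Fin d × Fin d) = (0, i, 0) then ω1 else 0) +
        (if ((a, b, c) : Fin d × Fin d × Fin d) = (i, 0, 0) then ω2 else 0) :=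
      fun a b c => three_ite' _ _ _ hne12 hne13 hne23 _ _ _ _
    simp only [expand, mul_add, Finset.sum_add_distrib]
    rw [sum3'', sum3'', sum3'']
    simp only [Matrix.of_apply, if_pos, if_neg (Ne.symm hi), hσ0, hσi, one_mul, mul_one,
      if_true]
    rw [three_ite' _ _ _ hne12' hne13' hne23']
    have E1 : (if t1 = 0 then (1:ℂ) else 0) * (if t2 = 0 then (1:ℂ) else 0) *
        (if t3 = 1 then (1:ℂ) else 0) =
        if ((t1, t2, t3) : Fin d × Fin d × Fin d) = (0, 0, 1) then 1 else 0 := by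
      by_cases e1 : t1 = 0 <;> by_cases e2 : t2 = 0 <;> by_cases e3 : t3 = 1 <;>
        simp [e1, e2, e3, Prod.ext_iff]
    have E2 : (if t1 = 0 then (1:ℂ) else 0) * (if t2 = 1 then (1:ℂ) else 0) *
        (if t3 = 0 then (1:ℂ) else 0) =
        if ((t1, t2, t3) : Fin d × Fin d × Fin d) = (0, 1, 0) then 1 else 0 := by
      by_cases e1 : t1 = 0 <;> by_cases e2 : t2 = 1 <;> by_cases e3 : t3 = 0 <;>
        simp [e1, e2, e3, Prod.ext_iff]
    have E3 : (if t1 = 1 then (1:ℂ) else 0) * (if t2 = 0 then (1:ℂ) else 0) *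
        (if t3 = 0 then (1:ℂ) else 0) =
        if ((t1, t2, t3) : Fin d × Fin d × Fin d) = (1, 0, 0) then 1 else 0 := by
      by_cases e1 : t1 = 1 <;> by_cases e2 : t2 = 0 <;> by_cases e3 : t3 = 0 <;>
        simp [e1, e2, e3, Prod.ext_iff]
    linear_combination E1 + (c2 * ω1) * E2 + (c1 * ω2) * E3 +
      (if ((t1, t2, t3) : Fin d × Fin d × Fin d) = (0, 1, 0) then (1:ℂ) else 0) * hc2ω +
      (if ((t1, t2, t3) : Fin d × Fin d × Fin d) = (1, 0, 0) then (1:ℂ) else 0) * hc1ω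
  · refine rank_ge_two' _ 0 i (0, i) (0, 0) ?_ ?_ ?_ ?_ <;>
      simp [Prod.ext_iff, hi, Ne.symm hi, hω2ne]
  · refine rank_ge_two' _ 0 i (0, i) (0, 0) ?_ ?_ ?_ ?_ <;>
      simp [Prod.ext_iff, hi, Ne.symm hi, hω1ne]
  · refine rank_ge_two' _ i 0 (0, 0) (0, i) ?_ ?_ ?_ ?_ <;>
      simp [Prod.ext_iff, hi, Ne.symm hi, hω1ne]
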